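/- Let P = v_1…v_k be a path and let b ∈ [0,B]. If α_b(P) ≥ 0, then α_b(P) = min{B, b + g(v_1…v_{i*})} + g(v_{i*}…v_k) for every index i* maximizing the prefix gain g(v_1…v_i) over 1 ≤ i ≤ k. -/
import Mathlib


open Finset

namespace EV

noncomputable section

/-- Charge after traversing `i` arcs of a path with arc gains `g`, battery capacity `B`,
initial charge `b`. -/
def charge (B b : ℝ) (g : ℕ → ℝ) : ℕ → ℝ
  | 0 => b
  | i + 1 => min (charge B b g i + g i) B

/-- The traversal of the path with `n` arcs is feasible from initial charge `b`. -/
def Feasible (B b : ℝ) (g : ℕ → ℝ) (n : ℕ) : Prop :=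
  ∀ i < n, 0 ≤ charge B b g i + g i

open Classical in
/-- Maximum final charge `α_b(P)` for a path `P` with `n` arc gains `g`,
as an extended real (`⊥ = -∞` if the traversal is infeasible). -/
def alpha (B b : ℝ) (g : ℕ → ℝ) (n : ℕ) : EReal :=
  if Feasible B b g n then ((charge B b g n : ℝ) : EReal) else ⊥

/-- Gain of the `i`-th vertex (0-indexed): the sum of the first `i` arc gains. -/
def vGain (g : ℕ → ℝ) (i : ℕ) : ℝ := ∑ t ∈ Finset.range i, g t

/-- `P` is traversable: `α_B(P) ≥ 0`, i.e. feasible from a full battery. -/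
def Traversable (B : ℝ) (g : ℕ → ℝ) (n : ℕ) : Prop := Feasible B B g n

/-- `C` is a charge drop schedule for a path with `n` arcs (vertices `0,…,n`):
no drop at the first vertex, all drops nonnegative. -/
def Schedule (C : ℕ → ℝ) (n : ℕ) : Prop := C 0 = 0 ∧ ∀ i ≤ n, 0 ≤ C i

/-- Gain of vertex `i` with respect to the charge drop schedule `C`. -/
def cGain (g C : ℕ → ℝ) (i : ℕ) : ℝ := vGain g i - ∑ t ∈ Finset.range (i + 1), C t

/-- `P` (with `n` arcs) is ascending with respect to the schedule `C`. -/
def AscendingC (B : ℝ) (g C : ℕ → ℝ) (n : ℕ) : Prop :=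
  Traversable B g n ∧ ∀ i ≤ n, 0 ≤ cGain g C i ∧ cGain g C i ≤ cGain g C n

/-- `P` (with `n` arcs) is descending with respect to the schedule `C`. -/
def DescendingC (B : ℝ) (g C : ℕ → ℝ) (n : ℕ) : Prop :=
  Traversable B g n ∧ ∀ i ≤ n, cGain g C n ≤ cGain g C i ∧ cGain g C i ≤ 0

/-- `P` is monotone with respect to the schedule `C`. -/
def MonotoneC (B : ℝ) (g C : ℕ → ℝ) (n : ℕ) : Prop :=
  AscendingC B g C n ∨ DescendingC B g C n

/-- Ascending with respect to the zero schedule. -/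
def Ascending (B : ℝ) (g : ℕ → ℝ) (n : ℕ) : Prop := AscendingC B g (fun _ => 0) n

/-- Descending with respect to the zero schedule. -/
def Descending (B : ℝ) (g : ℕ → ℝ) (n : ℕ) : Prop := DescendingC B g (fun _ => 0) n

/-- Monotone with respect to the zero schedule. -/
def MonotonePath (B : ℝ) (g : ℕ → ℝ) (n : ℕ) : Prop := Ascending B g n ∨ Descending B g n

/-- The contiguous subpath whose arcs start at arc index `a`. -/
def SubPath (g : ℕ → ℝ) (a : ℕ) : ℕ → ℝ := fun t => g (a + t)

/-- Restriction of a charge drop schedule to the subpath starting at vertex `a`: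
no drop at the subpath's first vertex. -/
def restrict (C : ℕ → ℝ) (a : ℕ) : ℕ → ℝ := fun t => if t = 0 then 0 else C (a + t)

/-- First-arc-bounded with respect to a schedule `C` (no drop at the second vertex,
and all vertex gains lie between the gains of the first two vertices). -/
def FirstArcBoundedC (g C : ℕ → ℝ) (n : ℕ) : Prop :=
  C 1 = 0 ∧
    ((0 ≤ g 0 ∧ ∀ i ≤ n, 0 ≤ cGain g C i ∧ cGain g C i ≤ g 0) ∨
     (g 0 ≤ 0 ∧ ∀ i ≤ n, g 0 ≤ cGain g C i ∧ cGain g C i ≤ 0))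

/-- Last-arc-bounded with respect to a schedule `C` (no drops at the last two vertices,
and all vertex gains lie between the gains of the last two vertices). -/
def LastArcBoundedC (g C : ℕ → ℝ) (n : ℕ) : Prop :=
  C (n - 1) = 0 ∧ C n = 0 ∧
    ((0 ≤ g (n - 1) ∧ ∀ i ≤ n, cGain g C (n - 1) ≤ cGain g C i ∧ cGain g C i ≤ cGain g C n) ∨
     (g (n - 1) < 0 ∧ ∀ i ≤ n, cGain g C n ≤ cGain g C i ∧ cGain g C i ≤ cGain g C (n - 1)))

/-- First-arc-bounded (zero schedule). -/
def FirstArcBounded (g : ℕ → ℝ) (n : ℕ) : Prop := FirstArcBoundedC g (fun _ => 0) n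

/-- Last-arc-bounded (zero schedule). -/
def LastArcBounded (g : ℕ → ℝ) (n : ℕ) : Prop := LastArcBoundedC g (fun _ => 0) n

/-- Arc-bounded: first- or last-arc-bounded. -/
def ArcBounded (g : ℕ → ℝ) (n : ℕ) : Prop := FirstArcBounded g n ∨ LastArcBounded g n

/-- A funnel: arc-bounded and containing no monotone subpath of 2 or 3 consecutive arcs. -/
def Funnel (B : ℝ) (g : ℕ → ℝ) (n : ℕ) : Prop :=
  ArcBounded g n ∧ ∀ a m, (m = 2 ∨ m = 3) → a + m ≤ n → ¬ MonotonePath B (SubPath g a) m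

/-- `j = s̄(i)`: the maximal index `j ≥ i` (among arcs of a path with `n` arcs) such that
the subpath of arcs `i,…,j` is first-arc-bounded. -/
def IsSbar (g : ℕ → ℝ) (n i j : ℕ) : Prop :=
  i ≤ j ∧ j < n ∧ FirstArcBounded (SubPath g i) (j - i + 1) ∧
    ∀ j', i ≤ j' → j' < n → FirstArcBounded (SubPath g i) (j' - i + 1) → j' ≤ j

/-- `j = s̲(i)`: the minimal index `j ≤ i` such that the subpath of arcs `j,…,i`
is last-arc-bounded. -/
def IsSlow (g : ℕ → ℝ) (n i j : ℕ) : Prop :=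
  j ≤ i ∧ i < n ∧ LastArcBounded (SubPath g j) (i - j + 1) ∧
    ∀ j', j' ≤ i → LastArcBounded (SubPath g j') (i - j' + 1) → j ≤ j'

/-- Arc gains of the walk around a cycle with `m` arc gains `g`, starting at vertex `a`. -/
def cyc (g : ℕ → ℝ) (m a : ℕ) : ℕ → ℝ := fun t => g ((a + t) % m)

/-- A walk of length `ℓ` from `x` to `y` in the directed graph with arc relation `A`. -/
def IsWalk {V : Type*} (A : V → V → Prop) (w : ℕ → V) (ℓ : ℕ) (x y : V) : Prop :=
  w 0 = x ∧ w ℓ = y ∧ ∀ t < ℓ, A (w t) (w (t + 1))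

/-- The sequence of arc gains induced by a walk `w` in a graph with gain function `g`. -/
def walkGains {V : Type*} (g : V → V → ℝ) (w : ℕ → V) : ℕ → ℝ :=
  fun t => g (w t) (w (t + 1))

lemma vGain_succ (g : ℕ → ℝ) (j : ℕ) : vGain g (j + 1) = vGain g j + g j :=
  Finset.sum_range_succ g j

lemma charge_succ (B b : ℝ) (g : ℕ → ℝ) (j : ℕ) :
    charge B b g (j + 1) = min (charge B b g j + g j) B := rfl

lemma charge_le (B b : ℝ) (g : ℕ → ℝ) :
    ∀ j t, t ≤ j → charge B b g j ≤ charge B b g t + (vGain g j - vGain g t) := by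
  intro j
  induction j with
  | zero => intro t ht; interval_cases t; simp
  | succ j ih =>
    intro t ht
    rcases Nat.lt_or_ge t (j + 1) with h' | h'
    · have h'' : t ≤ j := Nat.lt_succ_iff.mp h'
      have := ih t h''
      rw [charge_succ, vGain_succ]
      have hmin : min (charge B b g j + g j) B ≤ charge B b g j + g j := min_le_left _ _
      linarith
    · have : t = j + 1 := le_antisymm ht h'
      subst this; simp

lemma charge_le_B (B b : ℝ) (g : ℕ → ℝ) (j : ℕ) (hj : 0 < j) : charge B b g j ≤ B := by
  obtain ⟨m, rfl⟩ := Nat.exists_eq_succ_of_ne_zero hj.ne'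
  rw [charge_succ]; exact min_le_right _ _

lemma charge_ge (B b : ℝ) (g : ℕ → ℝ) :
    ∀ j (c : ℝ), c ≤ b + vGain g j →
      (∀ t, 1 ≤ t → t ≤ j → c ≤ B + vGain g j - vGain g t) → c ≤ charge B b g j := by
  intro j
  induction j with
  | zero => intro c h1 _; simpa [charge, vGain] using h1
  | succ j ih =>
    intro c h1 h2
    rw [charge_succ]
    apply le_min
    · have hgoal : c - g j ≤ charge B b g j := by
        apply ih
        · rw [vGain_succ] at h1; linarith
        · intro t ht1 ht2
          have := h2 t ht1 (le_trans ht2 (Nat.le_succ j))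
          rw [vGain_succ] at this; linarith
      linarith
    · have := h2 (j + 1) (by omega) (le_refl _)
      linarith

/-- If `α_b(P) ≥ 0`, then
`α_b(P) = min{B, b + g(v_1…v_{i*})} + g(v_{i*}…v_k)` for every index `i*` maximizing the
prefix gain. -/
theorem alpha_eq_of_nonneg (B : ℝ) (hB : 0 < B) (b : ℝ) (hb0 : 0 ≤ b) (hbB : b ≤ B)
    (g : ℕ → ℝ) (n : ℕ) (h : (0 : EReal) ≤ alpha B b g n)
    (i : ℕ) (hi : i ≤ n) (hmax : ∀ j ≤ n, vGain g j ≤ vGain g i) :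
    alpha B b g n = ((min B (b + vGain g i) + (vGain g n - vGain g i) : ℝ) : EReal) := by
  have hfeas : Feasible B b g n := by
    by_contra hf
    rw [alpha, if_neg hf] at h
    simp at h
  rw [alpha, if_pos hfeas]
  norm_cast
  have hc0 : charge B b g 0 = b := rfl
  have hv0 : vGain g 0 = 0 := by simp [vGain]
  have hub1 : charge B b g n ≤ b + vGain g n := by
    have := charge_le B b g n 0 (Nat.zero_le n)
    rw [hc0, hv0] at this; linarith
  refine le_antisymm ?_ ?_
  · -- upper bound
    rcases Nat.eq_zero_or_pos i with hi0 | hipos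
    · subst hi0
      rw [hv0, add_zero, min_eq_right hbB]
      linarith
    · have hub2 : charge B b g n ≤ B + (vGain g n - vGain g i) := by
        have h1 := charge_le B b g n i hi
        have h2 := charge_le_B B b g i hipos
        linarith
      rcases le_total B (b + vGain g i) with hc | hc
      · rw [min_eq_left hc]; linarith
      · rw [min_eq_right hc]; linarith
  · -- lower bound
    apply charge_ge
    · have : min B (b + vGain g i) ≤ b + vGain g i := min_le_right _ _
      linarith
    · intro t _ ht2
      have h1 : min B (b + vGain g i) ≤ B := min_le_left _ _
      have h2 := hmax t ht2
      linarith

end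

end EV
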